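/- Let λ ∈ [0,1] and define the phase-damping Kraus operators P₀ = !![1, 0; 0, √(1−λ)] and P₁ = !![0, 0; 0, √λ]. Then for the projectors Π± = (1/2)(𝟙 ± Q(Θ,Φ)), one has P₀†Π±P₀ + P₁†Π±P₁ = (1/2)(𝟙 ± v·σ) with v = (√(1−λ) sinΘ cosΦ, −√(1−λ) sinΘ sinΦ, cosΘ); in particular the induced POVM is unbiased (bias 0) with sharpness ‖v‖ = √(1 − λ sin²Θ). -/
import Mathlib


open Matrix

/-- Pauli matrix σ₁. -/
noncomputable def σ1 : Matrix (Fin 2) (Fin 2) ℂ := !![0, 1; 1, 0]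
/-- Pauli matrix σ₂. -/
noncomputable def σ2 : Matrix (Fin 2) (Fin 2) ℂ := !![0, -Complex.I; Complex.I, 0]
/-- Pauli matrix σ₃. -/
noncomputable def σ3 : Matrix (Fin 2) (Fin 2) ℂ := !![1, 0; 0, -1]

/-- The three Pauli matrices, indexed. -/
noncomputable def pauli : Fin 3 → Matrix (Fin 2) (Fin 2) ℂ
  | 0 => σ1
  | 1 => σ2
  | 2 => σ3

/-- `v · σ = v₁σ₁ + v₂σ₂ + v₃σ₃` for `v ∈ ℝ³`. -/
noncomputable def dotσ (v : Fin 3 → ℝ) : Matrix (Fin 2) (Fin 2) ℂ :=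
  ∑ i, (v i : ℂ) • pauli i

/-- Euclidean norm of `v ∈ ℝ³`. -/
noncomputable def enorm3 (v : Fin 3 → ℝ) : ℝ := Real.sqrt (v 0 ^ 2 + v 1 ^ 2 + v 2 ^ 2)

/-- The dichotomic observable `Q(Θ,Φ)`. -/
noncomputable def Qobs (Θ Φ : ℝ) : Matrix (Fin 2) (Fin 2) ℂ :=
  !![(Real.cos Θ : ℂ), Complex.exp (Φ * Complex.I) * (Real.sin Θ : ℂ);
     Complex.exp (-Φ * Complex.I) * (Real.sin Θ : ℂ), -(Real.cos Θ : ℂ)]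

/-- The spectral projectors `Π_s = (1/2)(𝟙 + s·Q(Θ,Φ))`, sign `s = ±1`. -/
noncomputable def projQ (Θ Φ s : ℝ) : Matrix (Fin 2) (Fin 2) ℂ :=
  (1/2 : ℂ) • (1 + (s : ℂ) • Qobs Θ Φ)

/-- The conjugate phase-damping channel maps `Π±` to the unbiased POVM `(1/2)(𝟙 ± v·σ)` with
`v = (√(1−λ) sinΘ cosΦ, −√(1−λ) sinΘ sinΦ, cosΘ)` of sharpness `√(1 − λ sin²Θ)`. -/
theorem stmt10 (l : ℝ) (hl : 0 ≤ l ∧ l ≤ 1) (Θ Φ : ℝ) :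
    (∀ s : ℝ, s = 1 ∨ s = -1 →
      (!![1, 0; 0, (Real.sqrt (1 - l) : ℂ)])ᴴ * projQ Θ Φ s * !![1, 0; 0, (Real.sqrt (1 - l) : ℂ)]
        + (!![0, 0; 0, (Real.sqrt l : ℂ)])ᴴ * projQ Θ Φ s * !![0, 0; 0, (Real.sqrt l : ℂ)]
        = (1/2 : ℂ) • (1 + (s : ℂ) •
            dotσ ![Real.sqrt (1 - l) * Real.sin Θ * Real.cos Φ,
                   -(Real.sqrt (1 - l) * Real.sin Θ * Real.sin Φ), Real.cos Θ])) ∧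
    enorm3 ![Real.sqrt (1 - l) * Real.sin Θ * Real.cos Φ,
             -(Real.sqrt (1 - l) * Real.sin Θ * Real.sin Φ), Real.cos Θ]
      = Real.sqrt (1 - l * Real.sin Θ ^ 2) := by
  obtain ⟨h0, h1⟩ := hl
  constructor
  · intro s hs
    have key : ((Real.sqrt (1-l) : ℂ))^2 + ((Real.sqrt l : ℂ))^2 = 1 := by
      have h : Real.sqrt (1-l) ^ 2 + Real.sqrt l ^ 2 = 1 := by
        rw [Real.sq_sqrt (by linarith), Real.sq_sqrt h0]; ring
      have := congrArg (fun x : ℝ => (x : ℂ)) h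
      push_cast at this; exact this
    have hexp : Complex.exp (-(↑Φ * Complex.I)) = Complex.cos Φ - Complex.sin Φ * Complex.I := by
      rw [show -(↑Φ * Complex.I) = (-↑Φ : ℂ) * Complex.I by ring, Complex.exp_mul_I,
        Complex.cos_neg, Complex.sin_neg]; ring
    ext i j
    fin_cases i <;> fin_cases j <;>
      simp [projQ, Qobs, dotσ, pauli, σ1, σ2, σ3, Matrix.mul_apply, Fin.sum_univ_succ,
        Matrix.one_apply, Complex.exp_mul_I, hexp]
    all_goals try ring
    all_goals linear_combination ((1 - (s:ℂ) * Complex.cos (Θ:ℂ))/2) * key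
  · unfold enorm3
    congr 1
    simp only [Matrix.cons_val_zero, Matrix.cons_val_one, Matrix.head_cons, Matrix.cons_val_two, Matrix.tail_cons]
    have h2 : Real.sqrt (1-l) ^ 2 = 1 - l := Real.sq_sqrt (by linarith)
    linear_combination Real.sin Θ^2*(Real.cos Φ^2 + Real.sin Φ^2)*h2
      + (1-l)*Real.sin Θ^2*(Real.sin_sq_add_cos_sq Φ) + Real.sin_sq_add_cos_sq Θ
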